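/- Let E₀ be a finite set of edges on V, let C_1, …, C_ℓ ⊆ V be communities with ℓ ≥ 1 and density thresholds α_1, …, α_ℓ ∈ [0,1], and suppose Φ(E₀) = 0. Let OPT be the minimum cardinality of a subset E' ⊆ E₀ with Φ(E') = 0. Suppose e_1, …, e_T ∈ E₀ are distinct edges such that, setting E_t = {e_1, …, e_t} (with E_0 = ∅), for every t ∈ {1,…,T} the edge e_t maximizes Φ(E_{t−1} ∪ {e}) over all e ∈ E₀ \ E_{t−1}, and moreover Φ(E_t) < 0 for all t < T while Φ(E_T) = 0. Then T ≤ (1 + ln ℓ)·OPT. -/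

import Mathlib

open scoped Classical

/-- The density potential `Φ(H, C) = min(0, |H(C)| − ⌈α·binom(|C|,2)⌉)`. -/
noncomputable def densityPotential {V : Type*} (C : Finset V) (α : ℝ)
    (H : Finset (Sym2 V)) : ℤ :=
  min 0 (((H.filter (fun e => ∀ v ∈ e, v ∈ C)).card : ℤ) - ⌈α * (C.card.choose 2 : ℝ)⌉)

/-- The total potential `Φ(H) = Σ_{i=1}^{ℓ} Φ(H, C_i)`. -/
noncomputable def totalPotential {V : Type*} {ℓ : ℕ} (C : Fin ℓ → Finset V)
    (α : Fin ℓ → ℝ) (H : Finset (Sym2 V)) : ℤ :=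
  ∑ i : Fin ℓ, densityPotential (C i) (α i) H

section helpers
variable {V : Type*} [DecidableEq V]

lemma dp_nonpos (C : Finset V) (α : ℝ) (H : Finset (Sym2 V)) :
    densityPotential C α H ≤ 0 := min_le_left _ _

lemma dp_mono (C : Finset V) (α : ℝ) {A B : Finset (Sym2 V)} (h : A ⊆ B) :
    densityPotential C α A ≤ densityPotential C α B := by
  unfold densityPotential
  have h1 := Finset.card_le_card (Finset.filter_subset_filter (fun e => ∀ v ∈ e, v ∈ C) h)
  have h2 : ((A.filter (fun e => ∀ v ∈ e, v ∈ C)).card : ℤ)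
      ≤ ((B.filter (fun e => ∀ v ∈ e, v ∈ C)).card : ℤ) := by exact_mod_cast h1
  omega

lemma dp_insert_le (C : Finset V) (α : ℝ) (f : Sym2 V) (H : Finset (Sym2 V)) :
    densityPotential C α (insert f H) ≤ densityPotential C α H + 1 := by
  unfold densityPotential
  have h1 : ((insert f H).filter (fun e => ∀ v ∈ e, v ∈ C)).card
      ≤ (H.filter (fun e => ∀ v ∈ e, v ∈ C)).card + 1 := by
    classical
    calc ((insert f H).filter (fun e => ∀ v ∈ e, v ∈ C)).card
        ≤ (insert f (H.filter (fun e => ∀ v ∈ e, v ∈ C))).card :=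
          Finset.card_le_card (by
            intro x hx
            rw [Finset.mem_filter, Finset.mem_insert] at hx
            rcases hx.1 with h | h
            · exact Finset.mem_insert.2 (Or.inl h)
            · exact Finset.mem_insert.2 (Or.inr (Finset.mem_filter.2 ⟨h, hx.2⟩)))
      _ ≤ _ := Finset.card_insert_le _ _
  have h2 : (((insert f H).filter (fun e => ∀ v ∈ e, v ∈ C)).card : ℤ)
      ≤ ((H.filter (fun e => ∀ v ∈ e, v ∈ C)).card : ℤ) + 1 := by exact_mod_cast h1
  omega

lemma dp_submod (C : Finset V) (α : ℝ) (A S : Finset (Sym2 V)) :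
    densityPotential C α (A ∪ S) - densityPotential C α A ≤
      ∑ f ∈ S \ A, (densityPotential C α (insert f A) - densityPotential C α A) := by
  classical
  set c : ℤ := ⌈α * (C.card.choose 2 : ℝ)⌉ with hc
  set m : ℕ := (A.filter (fun e => ∀ v ∈ e, v ∈ C)).card with hm
  set k : ℕ := ((S \ A).filter (fun e => ∀ v ∈ e, v ∈ C)).card with hk
  have hAS : A ∪ S = A ∪ (S \ A) := (Finset.union_sdiff_self_eq_union).symm
  have hunion : ((A ∪ S).filter (fun e => ∀ v ∈ e, v ∈ C)).card = m + k := by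
    rw [hAS, Finset.filter_union]
    exact Finset.card_union_of_disjoint
      (Finset.disjoint_filter_filter Finset.disjoint_sdiff)
  have hterm_nonneg : ∀ f ∈ S \ A,
      0 ≤ densityPotential C α (insert f A) - densityPotential C α A := fun f _ =>
    sub_nonneg.2 (dp_mono C α (Finset.subset_insert f A))
  by_cases hlt : (m : ℤ) < c
  · have hdpA : densityPotential C α A = (m : ℤ) - c := by
      unfold densityPotential; omega
    have hLHS : densityPotential C α (A ∪ S) - densityPotential C α A ≤ k := by
      unfold densityPotential
      rw [hunion]
      push_cast
      omega
    have hRHS : (k : ℤ) ≤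
        ∑ f ∈ S \ A, (densityPotential C α (insert f A) - densityPotential C α A) := by
      have h1 : ∀ f ∈ (S \ A).filter (fun e => ∀ v ∈ e, v ∈ C),
          (1 : ℤ) ≤ densityPotential C α (insert f A) - densityPotential C α A := by
        intro f hf
        rw [Finset.mem_filter, Finset.mem_sdiff] at hf
        have hfA : f ∉ A := hf.1.2
        have hcard : ((insert f A).filter (fun e => ∀ v ∈ e, v ∈ C)).card = m + 1 := by
          rw [Finset.filter_insert, if_pos hf.2,
            Finset.card_insert_of_notMem (fun h => hfA (Finset.mem_filter.1 h).1)]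
        rw [hdpA]
        unfold densityPotential
        rw [hcard]
        push_cast
        omega
      calc (k : ℤ) = ∑ _f ∈ (S \ A).filter (fun e => ∀ v ∈ e, v ∈ C), (1 : ℤ) := by simp [hk]
        _ ≤ ∑ f ∈ (S \ A).filter (fun e => ∀ v ∈ e, v ∈ C),
              (densityPotential C α (insert f A) - densityPotential C α A) :=
            Finset.sum_le_sum h1
        _ ≤ _ := Finset.sum_le_sum_of_subset_of_nonneg (Finset.filter_subset _ _)
            (fun f hf _ => hterm_nonneg f hf)
    linarith
  · have hdpA : densityPotential C α A = 0 := by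
      unfold densityPotential; omega
    have h2 : densityPotential C α (A ∪ S) ≤ 0 := dp_nonpos _ _ _
    have h3 := Finset.sum_nonneg hterm_nonneg
    linarith

end helpers
section tphelpers
variable {V : Type*} [DecidableEq V] {ℓ : ℕ} (C : Fin ℓ → Finset V) (α : Fin ℓ → ℝ)

lemma tp_nonpos (H : Finset (Sym2 V)) : totalPotential C α H ≤ 0 :=
  Finset.sum_nonpos (fun i _ => dp_nonpos (C i) (α i) H)

lemma tp_mono {A B : Finset (Sym2 V)} (h : A ⊆ B) :
    totalPotential C α A ≤ totalPotential C α B :=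
  Finset.sum_le_sum (fun i _ => dp_mono (C i) (α i) h)

lemma tp_insert_le (f : Sym2 V) (H : Finset (Sym2 V)) :
    totalPotential C α (insert f H) ≤ totalPotential C α H + ℓ := by
  have : totalPotential C α (insert f H) ≤ ∑ i : Fin ℓ, (densityPotential (C i) (α i) H + 1) :=
    Finset.sum_le_sum (fun i _ => dp_insert_le (C i) (α i) f H)
  simpa [totalPotential, Finset.sum_add_distrib] using this

lemma tp_submod (A S : Finset (Sym2 V)) :
    totalPotential C α (A ∪ S) - totalPotential C α A ≤
      ∑ f ∈ S \ A, (totalPotential C α (insert f A) - totalPotential C α A) := by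
  unfold totalPotential
  rw [← Finset.sum_sub_distrib]
  calc ∑ i : Fin ℓ, (densityPotential (C i) (α i) (A ∪ S) - densityPotential (C i) (α i) A)
      ≤ ∑ i : Fin ℓ, ∑ f ∈ S \ A,
          (densityPotential (C i) (α i) (insert f A) - densityPotential (C i) (α i) A) :=
        Finset.sum_le_sum (fun i _ => dp_submod (C i) (α i) A S)
    _ = ∑ f ∈ S \ A, ∑ i : Fin ℓ,
          (densityPotential (C i) (α i) (insert f A) - densityPotential (C i) (α i) A) :=
        Finset.sum_comm
    _ = _ := by
        apply Finset.sum_congr rfl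
        intro f _
        rw [Finset.sum_sub_distrib]

lemma tp_card_bound (S : Finset (Sym2 V)) :
    totalPotential C α S ≤ totalPotential C α ∅ + ℓ * S.card := by
  classical
  induction S using Finset.induction_on with
  | empty => simp
  | @insert a s hnot ih =>
    have h1 := tp_insert_le C α a s
    rw [Finset.card_insert_of_notMem hnot]
    push_cast
    linarith
end tphelpers

set_option maxHeartbeats 1600000 in
/-- The `(1 + ln ℓ)`-approximation guarantee of the `DGreedy` algorithm for the
`SparseDens` problem.  The greedy solution is `E_T = {e_1, …, e_T}` (here the edges
are indexed by `Fin T`, so `e ⟨t⟩` is the `(t+1)`-st chosen edge, and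
`Eset t = {e_1, …, e_t}`); `OPT` is the minimum cardinality of a subset `E' ⊆ E₀`
with `Φ(E') = 0`.  Then `T ≤ (1 + ln ℓ)·OPT`. -/
theorem dgreedy_approximation
    {V : Type*} [Fintype V] [DecidableEq V]
    (E₀ : Finset (Sym2 V)) (hE₀diag : ∀ e ∈ E₀, ¬ e.IsDiag)
    (ℓ : ℕ) (hℓ : 1 ≤ ℓ) (C : Fin ℓ → Finset V) (α : Fin ℓ → ℝ)
    (hα0 : ∀ i, 0 ≤ α i) (hα1 : ∀ i, α i ≤ 1)
    (hfeas : totalPotential C α E₀ = 0)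
    (OPT : ℕ)
    (hOPT₁ : ∃ E' ⊆ E₀, totalPotential C α E' = 0 ∧ E'.card = OPT)
    (hOPT₂ : ∀ E' ⊆ E₀, totalPotential C α E' = 0 → OPT ≤ E'.card)
    (T : ℕ) (e : Fin T → Sym2 V)
    (hdistinct : Function.Injective e)
    (hmem : ∀ t, e t ∈ E₀)
    (Eset : ℕ → Finset (Sym2 V))
    (hEset : ∀ n : ℕ, Eset n = (Finset.univ.filter (fun j : Fin T => (j : ℕ) < n)).image e)
    (hgreedy : ∀ t : Fin T, ∀ f ∈ E₀ \ Eset t,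
      totalPotential C α (insert f (Eset t)) ≤ totalPotential C α (insert (e t) (Eset t)))
    (hneg : ∀ t : Fin T, totalPotential C α (Eset t) < 0)
    (hfinal : totalPotential C α (Eset T) = 0) :
    (T : ℝ) ≤ (1 + Real.log ℓ) * OPT := by
  classical
  have hlog : (0:ℝ) ≤ Real.log ℓ := Real.log_nonneg (by exact_mod_cast hℓ)
  rcases Nat.eq_zero_or_pos T with hT0 | hTpos
  · subst hT0
    simp only [Nat.cast_zero]
    have : (0:ℝ) ≤ (OPT:ℝ) := Nat.cast_nonneg _
    nlinarith
  -- basic facts about Eset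
  have hE0 : Eset 0 = ∅ := by simp [hEset]
  have hEsucc : ∀ t : Fin T, Eset ((t:ℕ)+1) = insert (e t) (Eset (t:ℕ)) := by
    intro t
    rw [hEset, hEset, ← Finset.image_insert]
    congr 1
    ext j
    simp only [Finset.mem_insert, Finset.mem_filter, Finset.mem_univ, true_and]
    constructor
    · intro h
      rcases Nat.lt_succ_iff_lt_or_eq.1 h with h | h
      · exact Or.inr h
      · exact Or.inl (Fin.ext h)
    · rintro (h | h)
      · rw [h]; omega
      · omega
  have hOPTpos : 0 < OPT := by
    rcases Nat.eq_zero_or_pos OPT with h0 | h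
    · exfalso
      obtain ⟨E', hsub, hz, hcard⟩ := hOPT₁
      rw [h0, Finset.card_eq_zero] at hcard
      have h1 := hneg ⟨0, hTpos⟩
      have h2 : Eset ((⟨0, hTpos⟩ : Fin T) : ℕ) = ∅ := hE0
      rw [h2] at h1
      rw [hcard] at hz
      omega
    · exact h
  -- key greedy step inequality
  have step : ∀ t : Fin T,
      (OPT:ℤ) * (-(totalPotential C α (Eset ((t:ℕ)+1)))) ≤
        ((OPT:ℤ) - 1) * (-(totalPotential C α (Eset (t:ℕ)))) := by
    intro t
    obtain ⟨E', hsub, hz, hcard⟩ := hOPT₁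
    have hzero : totalPotential C α (Eset (t:ℕ) ∪ E') = 0 :=
      le_antisymm (tp_nonpos C α _) (hz ▸ tp_mono C α Finset.subset_union_right)
    have hsm := tp_submod C α (Eset (t:ℕ)) E'
    have hgain : ∀ f ∈ E' \ Eset (t:ℕ),
        totalPotential C α (insert f (Eset (t:ℕ))) - totalPotential C α (Eset (t:ℕ)) ≤
          totalPotential C α (Eset ((t:ℕ)+1)) - totalPotential C α (Eset (t:ℕ)) := by
      intro f hf
      rw [hEsucc t]
      have hf' : f ∈ E₀ \ Eset (t:ℕ) := Finset.mem_sdiff.2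
        ⟨hsub (Finset.mem_sdiff.1 hf).1, (Finset.mem_sdiff.1 hf).2⟩
      exact sub_le_sub_right (hgreedy t f hf') _
    have hgainpos : 0 ≤ totalPotential C α (Eset ((t:ℕ)+1)) - totalPotential C α (Eset (t:ℕ)) := by
      rw [hEsucc t]
      exact sub_nonneg.2 (tp_mono C α (Finset.subset_insert _ _))
    have hsum : ∑ f ∈ E' \ Eset (t:ℕ),
        (totalPotential C α (insert f (Eset (t:ℕ))) - totalPotential C α (Eset (t:ℕ))) ≤
          ((E' \ Eset (t:ℕ)).card : ℤ) *
            (totalPotential C α (Eset ((t:ℕ)+1)) - totalPotential C α (Eset (t:ℕ))) := by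
      calc _ ≤ ∑ _f ∈ E' \ Eset (t:ℕ),
            (totalPotential C α (Eset ((t:ℕ)+1)) - totalPotential C α (Eset (t:ℕ))) :=
          Finset.sum_le_sum hgain
        _ = _ := by rw [Finset.sum_const, nsmul_eq_mul]
    have hcard2 : ((E' \ Eset (t:ℕ)).card : ℤ) ≤ (OPT : ℤ) := by
      have := Finset.card_le_card (Finset.sdiff_subset (s := E') (t := Eset (t:ℕ)))
      exact_mod_cast hcard ▸ this
    have hkey : -(totalPotential C α (Eset (t:ℕ))) ≤
        (OPT:ℤ) * (totalPotential C α (Eset ((t:ℕ)+1)) - totalPotential C α (Eset (t:ℕ))) := by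
      have h1 : totalPotential C α (Eset (t:ℕ) ∪ E') - totalPotential C α (Eset (t:ℕ)) ≤
          ((E' \ Eset (t:ℕ)).card : ℤ) *
            (totalPotential C α (Eset ((t:ℕ)+1)) - totalPotential C α (Eset (t:ℕ))) :=
        le_trans hsm hsum
      rw [hzero] at h1
      calc -(totalPotential C α (Eset (t:ℕ))) = 0 - totalPotential C α (Eset (t:ℕ)) := by ring
        _ ≤ _ := le_trans h1 (mul_le_mul_of_nonneg_right hcard2 hgainpos)
    nlinarith [hkey]
  have hDnonneg : ∀ n : ℕ, 0 ≤ -(totalPotential C α (Eset n)) :=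
    fun n => neg_nonneg.2 (tp_nonpos C α _)
  -- strict decrease
  have hstrict : ∀ t : Fin T,
      -(totalPotential C α (Eset ((t:ℕ)+1))) < -(totalPotential C α (Eset (t:ℕ))) := by
    intro t
    have h1 := step t
    have h2 := hneg t
    have h3 : (1:ℤ) ≤ -(totalPotential C α (Eset (t:ℕ))) := by omega
    have h4 : (OPT:ℤ) * (-(totalPotential C α (Eset ((t:ℕ)+1)))) <
        (OPT:ℤ) * (-(totalPotential C α (Eset (t:ℕ)))) := by nlinarith
    exact lt_of_mul_lt_mul_left h4 (by positivity)
  -- lower bound D (T - k) ≥ k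
  have hDlb : ∀ k : ℕ, k ≤ T → (k:ℤ) ≤ -(totalPotential C α (Eset (T - k))) := by
    intro k
    induction k with
    | zero => intro _; simpa using hDnonneg T
    | succ k ih =>
      intro hk
      have h1 := ih (by omega)
      have ht : T - (k+1) < T := by omega
      have h2 := hstrict ⟨T - (k+1), ht⟩
      have h3 : ((⟨T - (k+1), ht⟩ : Fin T) : ℕ) = T - (k+1) := rfl
      rw [h3, show T - (k+1) + 1 = T - k by omega] at h2
      push_cast
      have := Int.add_one_le_iff.2 (lt_of_le_of_lt h1 h2)
      linarith
  -- D 0 ≤ ℓ * OPT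
  have hD0 : (-(totalPotential C α (Eset 0)) : ℤ) ≤ (ℓ : ℤ) * OPT := by
    obtain ⟨E', hsub, hz, hcard⟩ := hOPT₁
    have h1 := tp_card_bound C α E'
    rw [hz, hcard] at h1
    rw [hE0]
    linarith
  -- geometric decay over ℝ
  have hOPTr : (0:ℝ) < (OPT:ℝ) := by exact_mod_cast hOPTpos
  have hbase : (0:ℝ) ≤ 1 - 1/(OPT:ℝ) := by
    have : 1/(OPT:ℝ) ≤ 1 := by
      rw [div_le_one hOPTr]; exact_mod_cast hOPTpos
    linarith
  have hgeo : ∀ n : ℕ, n ≤ T →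
      ((-(totalPotential C α (Eset n)) : ℤ) : ℝ) ≤
        (1 - 1/(OPT:ℝ))^n * ((-(totalPotential C α (Eset 0)) : ℤ) : ℝ) := by
    intro n
    induction n with
    | zero => intro _; simp
    | succ n ih =>
      intro hn
      have h1 := ih (by omega)
      have hstep := step ⟨n, by omega⟩
      have h3 : ((⟨n, by omega⟩ : Fin T) : ℕ) = n := rfl
      rw [h3] at hstep
      have hstepR : ((-(totalPotential C α (Eset (n+1))) : ℤ) : ℝ) ≤
          (1 - 1/(OPT:ℝ)) * ((-(totalPotential C α (Eset n)) : ℤ) : ℝ) := by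
        have h4 : ((OPT:ℝ)) * ((-(totalPotential C α (Eset (n+1))) : ℤ) : ℝ) ≤
            ((OPT:ℝ) - 1) * ((-(totalPotential C α (Eset n)) : ℤ) : ℝ) := by
          exact_mod_cast hstep
        have h5 : (OPT:ℝ) * ((1 - 1/(OPT:ℝ)) * ((-(totalPotential C α (Eset n)) : ℤ) : ℝ))
            = ((OPT:ℝ) - 1) * ((-(totalPotential C α (Eset n)) : ℤ) : ℝ) := by
          field_simp
        have h6 : (OPT:ℝ) * ((-(totalPotential C α (Eset (n+1))) : ℤ) : ℝ) ≤
            (OPT:ℝ) * ((1 - 1/(OPT:ℝ)) * ((-(totalPotential C α (Eset n)) : ℤ) : ℝ)) := by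
          rw [h5]; exact h4
        exact le_of_mul_le_mul_left h6 hOPTr
      calc ((-(totalPotential C α (Eset (n+1))) : ℤ) : ℝ)
          ≤ (1 - 1/(OPT:ℝ)) * ((-(totalPotential C α (Eset n)) : ℤ) : ℝ) := hstepR
        _ ≤ (1 - 1/(OPT:ℝ)) *
            ((1 - 1/(OPT:ℝ))^n * ((-(totalPotential C α (Eset 0)) : ℤ) : ℝ)) :=
          mul_le_mul_of_nonneg_left h1 hbase
        _ = (1 - 1/(OPT:ℝ))^(n+1) * ((-(totalPotential C α (Eset 0)) : ℤ) : ℝ) := by ring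
  -- conclusion
  by_cases hTle : T ≤ OPT
  · have h1 : (T:ℝ) ≤ (OPT:ℝ) := by exact_mod_cast hTle
    nlinarith
  · push_neg at hTle
    set t0 := T - OPT with ht0
    have ht0T : t0 ≤ T := by omega
    have hlb : (OPT:ℝ) ≤ ((-(totalPotential C α (Eset t0)) : ℤ) : ℝ) := by
      exact_mod_cast hDlb OPT (by omega)
    have hD0R : ((-(totalPotential C α (Eset 0)) : ℤ) : ℝ) ≤ (ℓ:ℝ) * OPT := by
      exact_mod_cast hD0
    have hub : ((-(totalPotential C α (Eset t0)) : ℤ) : ℝ) ≤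
        (1 - 1/(OPT:ℝ))^t0 * ((ℓ:ℝ) * OPT) :=
      le_trans (hgeo t0 ht0T) (mul_le_mul_of_nonneg_left hD0R (pow_nonneg hbase t0))
    have hexp : (1 - 1/(OPT:ℝ))^t0 ≤ Real.exp (-((t0:ℝ)/(OPT:ℝ))) := by
      have h1 : (1 - 1/(OPT:ℝ)) ≤ Real.exp (-(1/(OPT:ℝ))) := by
        have := Real.add_one_le_exp (-(1/(OPT:ℝ)))
        linarith
      calc (1 - 1/(OPT:ℝ))^t0 ≤ (Real.exp (-(1/(OPT:ℝ))))^t0 :=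
          pow_le_pow_left₀ hbase h1 t0
        _ = Real.exp (-((t0:ℝ)/(OPT:ℝ))) := by
          rw [← Real.exp_nat_mul]; congr 1; push_cast; ring
    have hℓpos : (0:ℝ) < (ℓ:ℝ) := by exact_mod_cast hℓ
    have h2 : (OPT:ℝ) ≤ Real.exp (-((t0:ℝ)/(OPT:ℝ))) * ((ℓ:ℝ) * OPT) :=
      le_trans hlb (le_trans hub (mul_le_mul_of_nonneg_right hexp (by positivity)))
    have h3 : (1:ℝ) ≤ Real.exp (-((t0:ℝ)/(OPT:ℝ))) * (ℓ:ℝ) := by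
      rw [← mul_le_mul_iff_of_pos_right hOPTr]
      calc (1:ℝ) * OPT = (OPT:ℝ) := one_mul _
        _ ≤ Real.exp (-((t0:ℝ)/(OPT:ℝ))) * ((ℓ:ℝ) * OPT) := h2
        _ = Real.exp (-((t0:ℝ)/(OPT:ℝ))) * (ℓ:ℝ) * OPT := by ring
    have hmul : Real.exp (-((t0:ℝ)/(OPT:ℝ))) * Real.exp ((t0:ℝ)/(OPT:ℝ)) = 1 := by
      rw [← Real.exp_add]; simp
    have h4 : Real.exp ((t0:ℝ)/(OPT:ℝ)) ≤ (ℓ:ℝ) := by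
      have h := mul_le_mul_of_nonneg_right h3 (le_of_lt (Real.exp_pos ((t0:ℝ)/(OPT:ℝ))))
      rw [one_mul] at h
      calc Real.exp ((t0:ℝ)/(OPT:ℝ))
          ≤ Real.exp (-((t0:ℝ)/(OPT:ℝ))) * (ℓ:ℝ) * Real.exp ((t0:ℝ)/(OPT:ℝ)) := h
        _ = (ℓ:ℝ) * (Real.exp (-((t0:ℝ)/(OPT:ℝ))) * Real.exp ((t0:ℝ)/(OPT:ℝ))) := by ring
        _ = (ℓ:ℝ) := by rw [hmul, mul_one]
    have h5 : (t0:ℝ)/(OPT:ℝ) ≤ Real.log ℓ :=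
      (Real.le_log_iff_exp_le hℓpos).2 h4
    have h6 : (t0:ℝ) ≤ Real.log ℓ * (OPT:ℝ) := by
      rwa [div_le_iff₀ hOPTr] at h5
    have h7 : (T:ℝ) = (t0:ℝ) + (OPT:ℝ) := by
      rw [ht0]; push_cast [Nat.cast_sub (le_of_lt hTle)]; ring
    rw [h7]; nlinarith
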